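/- For an LMP τ : S → (D S)^A, the ε-distance d*(s,t) = inf {ε | s ∼_ε t} is the greatest fixpoint of Δ_LP (with respect to the pointwise order on pseudometrics where smaller values are larger in the fixpoint order). -/

import Mathlib

open scoped ENNReal Classical

noncomputable section

def mass {S : Type*} (φ : S → ℝ≥0∞) (X : Set S) : ℝ≥0∞ := ∑' x : X, φ x

def IsSubdist {S : Type*} (φ : S → ℝ≥0∞) : Prop := mass φ Set.univ ≤ 1

def IsPseudometric {S : Type*} (d : S → S → ℝ≥0∞) : Prop :=
  (∀ x, d x x = 0) ∧ (∀ x y, d x y = d y x) ∧ (∀ x y z, d x z ≤ d x y + d y z)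

def Bounded1 {S : Type*} (d : S → S → ℝ≥0∞) : Prop := ∀ x y, d x y ≤ 1

def eball {S : Type*} (d : S → S → ℝ≥0∞) (X : Set S) (ε : ℝ≥0∞) : Set S :=
  {y | ∃ x ∈ X, d x y < ε}

def LP {S : Type*} (d : S → S → ℝ≥0∞) (μ ν : S → ℝ≥0∞) : ℝ≥0∞ :=
  sInf {ε | ∀ X : Set S,
    mass μ X ≤ mass ν (eball d X ε) + ε ∧ mass ν X ≤ mass μ (eball d X ε) + ε}

def relImg {S : Type*} (R : S → S → Prop) (X : Set S) : Set S := {y | ∃ x ∈ X, R x y}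

def IsEpsBisim {S A : Type*} (τ : A → S → S → ℝ≥0∞) (ε : ℝ≥0∞) (R : S → S → Prop) : Prop :=
  Symmetric R ∧ ∀ s t, R s t → ∀ a : A, ∀ X : Set S,
    mass (τ a s) X ≤ mass (τ a t) (relImg R X) + ε

def EpsBisimilar {S A : Type*} (τ : A → S → S → ℝ≥0∞) (ε : ℝ≥0∞) (s t : S) : Prop :=
  ∃ R, IsEpsBisim τ ε R ∧ R s t

def dstar {S A : Type*} (τ : A → S → S → ℝ≥0∞) (s t : S) : ℝ≥0∞ :=
  sInf {ε | ε ≤ 1 ∧ EpsBisimilar τ ε s t}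

def DeltaLP {S A : Type*} (τ : A → S → S → ℝ≥0∞) (d : S → S → ℝ≥0∞) (s₀ s₁ : S) : ℝ≥0∞ :=
  ⨆ a : A, LP d (τ a s₀) (τ a s₁)


section Aux

variable {S A : Type*}

lemma mass_mono (φ : S → ℝ≥0∞) {X Y : Set S} (h : X ⊆ Y) : mass φ X ≤ mass φ Y :=
  ENNReal.summable.tsum_le_tsum_of_inj (Set.inclusion h) (Set.inclusion_injective h)
    (fun _ _ => zero_le) (fun _ => le_rfl) ENNReal.summable

def LPset (d : S → S → ℝ≥0∞) (μ ν : S → ℝ≥0∞) : Set ℝ≥0∞ :=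
  {ε | ∀ X : Set S,
    mass μ X ≤ mass ν (eball d X ε) + ε ∧ mass ν X ≤ mass μ (eball d X ε) + ε}

lemma LP_eq (d : S → S → ℝ≥0∞) (μ ν : S → ℝ≥0∞) : LP d μ ν = sInf (LPset d μ ν) := rfl

lemma eball_mono (d : S → S → ℝ≥0∞) (X : Set S) {ε₁ ε₂ : ℝ≥0∞} (h : ε₁ ≤ ε₂) :
    eball d X ε₁ ⊆ eball d X ε₂ := fun y ⟨x, hx, hd⟩ => ⟨x, hx, lt_of_lt_of_le hd h⟩

lemma LPset_up {d : S → S → ℝ≥0∞} {μ ν : S → ℝ≥0∞} {ε₁ ε₂ : ℝ≥0∞} (h12 : ε₁ ≤ ε₂)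
    (h : ε₁ ∈ LPset d μ ν) : ε₂ ∈ LPset d μ ν := by
  intro X
  exact ⟨(h X).1.trans (add_le_add (mass_mono ν (eball_mono d X h12)) h12),
         (h X).2.trans (add_le_add (mass_mono μ (eball_mono d X h12)) h12)⟩

lemma mem_LPset_of_lt {d : S → S → ℝ≥0∞} {μ ν : S → ℝ≥0∞} {ε : ℝ≥0∞}
    (h : LP d μ ν < ε) : ε ∈ LPset d μ ν := by
  obtain ⟨ε₁, hmem, hlt⟩ := sInf_lt_iff.mp h
  exact LPset_up hlt.le hmem

lemma LP_comm (d : S → S → ℝ≥0∞) (μ ν : S → ℝ≥0∞) : LP d μ ν = LP d ν μ := by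
  rw [LP_eq, LP_eq]
  congr 1
  ext ε
  exact ⟨fun h X => (h X).symm, fun h X => (h X).symm⟩

lemma epsBisimilar_symm {τ : A → S → S → ℝ≥0∞} {ε : ℝ≥0∞} {s t : S}
    (h : EpsBisimilar τ ε s t) : EpsBisimilar τ ε t s := by
  obtain ⟨R, hR, hst⟩ := h
  exact ⟨R, hR, hR.1 hst⟩

lemma dstar_comm (τ : A → S → S → ℝ≥0∞) (s t : S) : dstar τ s t = dstar τ t s := by
  unfold dstar
  congr 1
  ext ε
  exact and_congr_right fun _ => ⟨epsBisimilar_symm, epsBisimilar_symm⟩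

lemma dstar_le_one (τ : A → S → S → ℝ≥0∞) (hτ : ∀ a s, IsSubdist (τ a s)) (s t : S) :
    dstar τ s t ≤ 1 := by
  refine sInf_le ⟨le_rfl, fun _ _ => True, ⟨fun _ _ _ => trivial, ?_⟩, trivial⟩
  intro x y _ a X
  have h1 : mass (τ a x) X ≤ 1 := (mass_mono (τ a x) (Set.subset_univ X)).trans (hτ a x)
  exact h1.trans (self_le_add_left 1 _)

lemma dstar_le_of_bisim {τ : A → S → S → ℝ≥0∞} {ε : ℝ≥0∞} {R : S → S → Prop}
    (hε : ε ≤ 1) (hR : IsEpsBisim τ ε R) {x y : S} (hxy : R x y) : dstar τ x y ≤ ε :=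
  sInf_le ⟨hε, R, hR, hxy⟩

lemma LP_le_of_bisim {τ : A → S → S → ℝ≥0∞} {ε : ℝ≥0∞} {R : S → S → Prop}
    (hε : ε ≤ 1) (hR : IsEpsBisim τ ε R) {s t : S} (hst : R s t) (a : A) :
    LP (dstar τ) (τ a s) (τ a t) ≤ ε := by
  refine le_of_forall_gt_imp_ge_of_dense fun ε' hε' => ?_
  rw [LP_eq]
  refine sInf_le fun X => ?_
  have hsub : relImg R X ⊆ eball (dstar τ) X ε' := by
    rintro y' ⟨x', hx', hxy'⟩
    exact ⟨x', hx', lt_of_le_of_lt (dstar_le_of_bisim hε hR hxy') hε'⟩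
  exact ⟨(hR.2 s t hst a X).trans
          (add_le_add (mass_mono (τ a t) hsub) hε'.le),
        (hR.2 t s (hR.1 hst) a X).trans
          (add_le_add (mass_mono (τ a s) hsub) hε'.le)⟩

lemma DeltaLP_dstar_le (τ : A → S → S → ℝ≥0∞) (s t : S) :
    DeltaLP τ (dstar τ) s t ≤ dstar τ s t := by
  refine iSup_le fun a => le_sInf fun ε hε => ?_
  obtain ⟨hε1, R, hR, hst⟩ := hε
  exact LP_le_of_bisim hε1 hR hst a

lemma bisim_of_DeltaLP_lt (τ : A → S → S → ℝ≥0∞) {ε : ℝ≥0∞} {s t : S}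
    (hE : DeltaLP τ (dstar τ) s t < ε) : EpsBisimilar τ ε s t := by
  set R : S → S → Prop :=
    fun x y => dstar τ x y < ε ∨ (x = s ∧ y = t) ∨ (x = t ∧ y = s) with hRdef
  have hLP : ∀ x y : S, R x y → ∀ a : A, LP (dstar τ) (τ a x) (τ a y) < ε := by
    rintro x y (h | ⟨rfl, rfl⟩ | ⟨rfl, rfl⟩) a
    · exact lt_of_le_of_lt ((le_iSup (fun a => LP (dstar τ) (τ a x) (τ a y)) a).trans
        (DeltaLP_dstar_le τ x y)) h
    · exact lt_of_le_of_lt (le_iSup (fun a => LP (dstar τ) (τ a x) (τ a y)) a) hE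
    · rw [LP_comm]
      exact lt_of_le_of_lt (le_iSup (fun a => LP (dstar τ) (τ a y) (τ a x)) a) hE
  refine ⟨R, ⟨?_, ?_⟩, Or.inr (Or.inl ⟨rfl, rfl⟩)⟩
  · rintro x y (h | ⟨rfl, rfl⟩ | ⟨rfl, rfl⟩)
    · exact Or.inl (dstar_comm τ x y ▸ h)
    · exact Or.inr (Or.inr ⟨rfl, rfl⟩)
    · exact Or.inr (Or.inl ⟨rfl, rfl⟩)
  · intro x y hxy a X
    have hmem := mem_LPset_of_lt (hLP x y hxy a)
    have hsub : eball (dstar τ) X ε ⊆ relImg R X := by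
      rintro y' ⟨x', hx', hd⟩
      exact ⟨x', hx', Or.inl hd⟩
    exact ((hmem X).1).trans (add_le_add (mass_mono (τ a y) hsub) le_rfl)

lemma le_DeltaLP_dstar (τ : A → S → S → ℝ≥0∞) (hτ : ∀ a s, IsSubdist (τ a s)) (s t : S) :
    dstar τ s t ≤ DeltaLP τ (dstar τ) s t := by
  refine le_of_forall_gt_imp_ge_of_dense fun ε hε => ?_
  rcases le_total ε 1 with h1 | h1
  · exact sInf_le ⟨h1, bisim_of_DeltaLP_lt τ hε⟩
  · exact (dstar_le_one τ hτ s t).trans h1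

end Aux

theorem stmt9 {S A : Type*} (τ : A → S → S → ℝ≥0∞) (hτ : ∀ a s, IsSubdist (τ a s)) :
    DeltaLP τ (dstar τ) = dstar τ ∧
    ∀ d : S → S → ℝ≥0∞, IsPseudometric d → DeltaLP τ d = d →
      ∀ s t : S, dstar τ s t ≤ d s t := by
  constructor
  · funext s t
    exact le_antisymm (DeltaLP_dstar_le τ s t) (le_DeltaLP_dstar τ hτ s t)
  · intro d hd hfix s t
    have hbisim : ∀ ε : ℝ≥0∞, IsEpsBisim τ ε (fun x y => d x y < ε) := by
      intro ε
      constructor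
      · intro x y h
        simpa only [hd.2.1 x y] using h
      · intro x y hxy a X
        have hLP : LP d (τ a x) (τ a y) < ε := by
          have h1 : LP d (τ a x) (τ a y) ≤ DeltaLP τ d x y :=
            le_iSup (fun a => LP d (τ a x) (τ a y)) a
          have h2 : DeltaLP τ d x y = d x y := congrFun (congrFun hfix x) y
          exact lt_of_le_of_lt (h1.trans_eq h2) hxy
        have hmem := mem_LPset_of_lt hLP
        have hsub : eball d X ε ⊆ relImg (fun x y => d x y < ε) X := fun y' h => h
        exact ((hmem X).1).trans (add_le_add (mass_mono (τ a y) hsub) le_rfl)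
    refine le_of_forall_gt_imp_ge_of_dense fun ε hε => ?_
    rcases le_total ε 1 with h1 | h1
    · exact sInf_le ⟨h1, (fun x y => d x y < ε), hbisim ε, hε⟩
    · exact (dstar_le_one τ hτ s t).trans h1
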